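/- Let C' be a projective binary linear [n',k',d']_2-code with k' ≥ 2 (a k'-dimensional subspace of F_2^{n'} of minimum Hamming distance at least d'). Then n_2(k'+1, min{2d', n'+1}, 2) ≤ 2n'+1; that is, there exists a binary linear code of length 2n'+1, dimension k'+1, minimum Hamming distance at least min{2d', n'+1}, and locality 2. -/

import Mathlib

open scoped Classical

/-- The Hamming weight of a vector: the number of nonzero coordinates. -/
noncomputable def hamWt {F : Type} [Field F] {n : ℕ} (c : Fin n → F) : ℕ :=
  (Finset.univ.filter fun i => c i ≠ 0).card

/-- `C` is a linear `[n,k,d]` code over `F`: a `k`-dimensional subspace of `F^n`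
in which every nonzero codeword has Hamming weight at least `d`. -/
def IsCode {F : Type} [Field F] {n : ℕ} (k d : ℕ) (C : Submodule F (Fin n → F)) : Prop :=
  Module.finrank F ↥C = k ∧ ∀ c ∈ C, c ≠ 0 → d ≤ hamWt c

/-- `C ⊆ F^n` has locality `r`: every coordinate `i` has a recovery set `S` of at most `r`
other coordinates such that any two codewords agreeing on `S` agree at `i`. -/
def HasLocality {F : Type} [Field F] {n : ℕ} (C : Submodule F (Fin n → F)) (r : ℕ) : Prop :=
  ∀ i : Fin n, ∃ S : Finset (Fin n), i ∉ S ∧ S.card ≤ r ∧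
    ∀ c ∈ C, ∀ c' ∈ C, (∀ j ∈ S, c j = c' j) → c i = c' i

/-- There exists a linear `[n,k,d]_q` code (over some field with `q` elements). -/
def CodeExists (q n k d : ℕ) : Prop :=
  ∃ (F : Type) (_ : Field F), Nat.card F = q ∧
    ∃ C : Submodule F (Fin n → F), IsCode k d C

/-- There exists a linear `[n,k,d]_q` code with locality `r`. -/
def LRCExists (q n k d r : ℕ) : Prop :=
  ∃ (F : Type) (_ : Field F), Nat.card F = q ∧
    ∃ C : Submodule F (Fin n → F), IsCode k d C ∧ HasLocality C r

/-- `n_q(k,d)`: the smallest length of a linear `[n,k,d]_q` code. -/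
noncomputable def nCode (q k d : ℕ) : ℕ := sInf {n | CodeExists q n k d}

/-- `n_q(k,d,r)`: the smallest length of a linear `[n,k,d]_q` code with locality `r`. -/
noncomputable def nLRC (q k d r : ℕ) : ℕ := sInf {n | LRCExists q n k d r}

/-- There exists an `[n,k]_q` code with locality `r` (no condition on minimum distance). -/
def LRCExistsNoDist (q n k r : ℕ) : Prop :=
  ∃ (F : Type) (_ : Field F), Nat.card F = q ∧
    ∃ C : Submodule F (Fin n → F), Module.finrank F ↥C = k ∧ HasLocality C r

/-- `n'_q(k,r)`: the smallest length of an `[n,k]_q` code with locality `r`. -/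
noncomputable def nLRCNoDist (q k r : ℕ) : ℕ := sInf {n | LRCExistsNoDist q n k r}

/-- The dual code of `C`. -/
def dualCode {F : Type} [Field F] {n : ℕ} (C : Submodule F (Fin n → F)) : Set (Fin n → F) :=
  {x | ∀ c ∈ C, ∑ j, x j * c j = 0}

/-- `C` is projective: non-degenerate and no two coordinates are proportional. -/
def IsProjective {F : Type} [Field F] {n : ℕ} (C : Submodule F (Fin n → F)) : Prop :=
  (∀ i : Fin n, ∃ c ∈ C, c i ≠ 0) ∧
    (∀ i j : Fin n, i ≠ j → ∀ lam : F, lam ≠ 0 → ∃ c ∈ C, c i ≠ lam * c j)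

/-- The Griesmer bound `g_q(k,d) = ∑_{i=0}^{k-1} ⌈d/q^i⌉`. -/
noncomputable def griesmer (q k d : ℕ) : ℕ :=
  ∑ i ∈ Finset.range k, ⌈(d : ℚ) / (q : ℚ) ^ i⌉₊



noncomputable def myphi (n' : ℕ) : ((Fin n' → ZMod 2) × ZMod 2) →ₗ[ZMod 2] (Fin (2*n'+1) → ZMod 2) where
  toFun p i := if h : (i:ℕ) < n' then p.1 ⟨i, h⟩
    else if h2 : (i:ℕ) - n' < n' then p.1 ⟨(i:ℕ) - n', h2⟩ + p.2 else p.2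
  map_add' p q := by funext i; simp only [Prod.fst_add, Prod.snd_add, Pi.add_apply]; split_ifs <;> ring
  map_smul' r p := by
    funext i
    simp only [Prod.smul_fst, Prod.smul_snd, Pi.smul_apply, smul_eq_mul, RingHom.id_apply]
    split_ifs <;> ring

lemma myphi_apply_lt (n' : ℕ) (p : (Fin n' → ZMod 2) × ZMod 2) (j : ℕ) (h : j < n') :
    myphi n' p ⟨j, by omega⟩ = p.1 ⟨j, h⟩ := by
  simp only [myphi, LinearMap.coe_mk, AddHom.coe_mk]; rw [dif_pos h]

lemma myphi_apply_mid (n' : ℕ) (p : (Fin n' → ZMod 2) × ZMod 2) (j : ℕ) (h : j < n') :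
    myphi n' p ⟨j + n', by omega⟩ = p.1 ⟨j, h⟩ + p.2 := by
  simp only [myphi, LinearMap.coe_mk, AddHom.coe_mk]
  rw [dif_neg (by omega), dif_pos (show j + n' - n' < n' by omega)]
  simp only [Nat.add_sub_cancel]

lemma myphi_apply_last (n' : ℕ) (p : (Fin n' → ZMod 2) × ZMod 2) :
    myphi n' p ⟨2*n', by omega⟩ = p.2 := by
  simp only [myphi, LinearMap.coe_mk, AddHom.coe_mk]
  rw [dif_neg (by omega), dif_neg (by omega)]

lemma myphi_inj (n' : ℕ) : Function.Injective (myphi n') := by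
  intro p q h
  have h2 : ∀ i : Fin (2*n'+1), myphi n' p i = myphi n' q i := fun i => congrFun h i
  refine Prod.ext ?_ ?_
  · funext j
    have := h2 ⟨j, by omega⟩
    simpa [myphi, j.isLt] using this
  · have := h2 ⟨2*n', by omega⟩
    rwa [myphi_apply_last, myphi_apply_last] at this
lemma hamWt_eq {n : ℕ} (v : Fin n → ZMod 2) [DecidablePred fun i : Fin n => v i ≠ 0] :
    hamWt v = (Finset.univ.filter fun i : Fin n => v i ≠ 0).card := by
  unfold hamWt; congr


-- weight, a = 0 case
lemma wt_zero (n' : ℕ) (v : Fin n' → ZMod 2) :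
    2 * hamWt v ≤ hamWt (myphi n' (v, 0)) := by
  classical
  have key : ((Finset.univ.filter fun i : Fin n' => v i ≠ 0) ×ˢ (Finset.univ : Finset Bool)).card
      ≤ (Finset.univ.filter fun i : Fin (2*n'+1) => myphi n' (v,0) i ≠ 0).card := by
    apply Finset.card_le_card_of_injOn
      (fun x => if x.2 then (⟨x.1, by omega⟩ : Fin (2*n'+1)) else ⟨x.1 + n', by omega⟩)
    · rintro ⟨i, b⟩ hib
      simp only [Finset.mem_coe, Finset.mem_product, Finset.mem_filter, Finset.mem_univ, true_and] at hib ⊢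
      cases b
      · simp only [if_neg Bool.false_ne_true]
        show ¬ (myphi n' (v,0) ⟨i + n', by omega⟩ = 0)
        simp only [myphi, LinearMap.coe_mk, AddHom.coe_mk]
        rw [dif_neg (by omega), dif_pos (by omega : (i:ℕ) + n' - n' < n')]
        simpa using hib
      · simp only [if_pos rfl]
        show ¬ (myphi n' (v,0) ⟨i, by omega⟩ = 0)
        simp only [myphi, LinearMap.coe_mk, AddHom.coe_mk]
        rw [dif_pos (by omega : ((i:ℕ)) < n')]
        simpa using hib
    · rintro ⟨i, b⟩ - ⟨j, b'⟩ - h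
      cases b <;> cases b' <;> simp only [if_pos, if_neg Bool.false_ne_true] at h <;>
        · have := congrArg Fin.val h
          simp only at this
          have hi := i.isLt; have hj := j.isLt
          ext <;> simp_all <;> omega
  rw [hamWt_eq, hamWt_eq]
  calc 2 * (Finset.univ.filter fun i : Fin n' => v i ≠ 0).card
      = ((Finset.univ.filter fun i : Fin n' => v i ≠ 0) ×ˢ (Finset.univ : Finset Bool)).card := by
        rw [Finset.card_product]; simp [mul_comm]
    _ ≤ _ := key
lemma wt_one (n' : ℕ) (v : Fin n' → ZMod 2) :
    n' + 1 ≤ hamWt (myphi n' (v, 1)) := by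
  classical
  rw [hamWt_eq]
  have key : (Finset.univ : Finset (Fin (n'+1))).card
      ≤ (Finset.univ.filter fun i : Fin (2*n'+1) => myphi n' (v,1) i ≠ 0).card := by
    apply Finset.card_le_card_of_injOn
      (fun x : Fin (n'+1) => if h : (x:ℕ) < n' then
        (if v ⟨x, h⟩ ≠ 0 then (⟨x, by omega⟩ : Fin (2*n'+1)) else ⟨(x:ℕ) + n', by omega⟩)
        else ⟨2*n', by omega⟩)
    · rintro x -
      simp only [Finset.mem_coe, Finset.mem_filter, Finset.mem_univ, true_and]
      by_cases h : (x:ℕ) < n'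
      · rw [dif_pos h]
        by_cases hv : v ⟨x, h⟩ ≠ 0
        · rw [if_pos hv]
          show ¬ (myphi n' (v,1) ⟨x, by omega⟩ = 0)
          simp only [myphi, LinearMap.coe_mk, AddHom.coe_mk]
          rw [dif_pos h]
          exact hv
        · rw [if_neg hv]
          show ¬ (myphi n' (v,1) ⟨(x:ℕ) + n', by omega⟩ = 0)
          simp only [myphi, LinearMap.coe_mk, AddHom.coe_mk]
          rw [dif_neg (by omega), dif_pos (by omega : (x:ℕ) + n' - n' < n')]
          push_neg at hv
          simp only [show ((x:ℕ) + n' - n' : ℕ) = (x:ℕ) by omega]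
          rw [show ((⟨(x:ℕ), by omega⟩ : Fin n')) = ⟨x, h⟩ from rfl, hv]
          decide
      · rw [dif_neg h]
        show ¬ (myphi n' (v,1) ⟨2*n', by omega⟩ = 0)
        simp only [myphi, LinearMap.coe_mk, AddHom.coe_mk]
        rw [dif_neg (by omega), dif_neg (by omega)]
        decide
    · rintro x - y - h
      have hx := x.isLt; have hy := y.isLt
      have hval := congrArg Fin.val h
      simp only at hval
      split_ifs at hval <;> simp only [Fin.val_mk] at hval <;> ext <;> omega
  simpa using key

theorem line_construction (n' k' d' : ℕ) (hk : 2 ≤ k')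
    (C : Submodule (ZMod 2) (Fin n' → ZMod 2)) (hC : IsCode k' d' C)
    (hproj : IsProjective C) :
    nLRC 2 (k' + 1) (min (2 * d') (n' + 1)) 2 ≤ 2 * n' + 1 ∧
      LRCExists 2 (2 * n' + 1) (k' + 1) (min (2 * d') (n' + 1)) 2 := by
  classical
  obtain ⟨hrank, hdist⟩ := hC
  have hn2 : 2 ≤ n' := by
    have h1 : Module.finrank (ZMod 2) ↥C ≤ Module.finrank (ZMod 2) (Fin n' → ZMod 2) :=
      Submodule.finrank_le C
    rw [hrank, Module.finrank_pi] at h1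
    simpa using le_trans hk (by simpa using h1)
  -- the new code
  set ψ : (↥C × ZMod 2) →ₗ[ZMod 2] (Fin (2*n'+1) → ZMod 2) :=
    (myphi n').comp ((C.subtype).prodMap LinearMap.id) with hψ
  have hψ_apply : ∀ (v : ↥C) (a : ZMod 2), ψ (v, a) = myphi n' ((v : Fin n' → ZMod 2), a) :=
    fun v a => rfl
  set D : Submodule (ZMod 2) (Fin (2*n'+1) → ZMod 2) := LinearMap.range ψ with hD
  have hψ_inj : Function.Injective ψ := by
    intro p q h
    have h' : ((p.1 : Fin n' → ZMod 2), p.2) = ((q.1 : Fin n' → ZMod 2), q.2) :=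
      myphi_inj n' h
    rw [Prod.mk.injEq] at h'
    exact Prod.ext (Subtype.ext h'.1) h'.2
  -- dimension
  have hrankD : Module.finrank (ZMod 2) ↥D = k' + 1 := by
    rw [hD, LinearMap.finrank_range_of_inj hψ_inj, Module.finrank_prod, hrank,
      Module.finrank_self]
  -- minimum distance
  have hdistD : ∀ c ∈ D, c ≠ 0 → min (2 * d') (n' + 1) ≤ hamWt c := by
    intro c hc hc0
    obtain ⟨⟨v, a⟩, rfl⟩ := hc
    rw [hψ_apply] at hc0 ⊢
    rcases (by decide : ∀ x : ZMod 2, x = 0 ∨ x = 1) a with rfl | rfl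
    · have hv : (v : Fin n' → ZMod 2) ≠ 0 := by
        intro h0
        apply hc0
        rw [h0]
        exact map_zero (myphi n')
      refine le_trans (min_le_left _ _) (le_trans ?_ (wt_zero n' v))
      have := hdist v v.2 hv
      omega
    · exact le_trans (min_le_right _ _) (wt_one n' v)
  -- locality
  have hlocD : HasLocality D 2 := by
    intro i
    rcases lt_or_ge (i : ℕ) n' with hi | hi
    · refine ⟨{⟨(i:ℕ) + n', by omega⟩, ⟨2*n', by omega⟩}, ?_, ?_, ?_⟩
      · simp only [Finset.mem_insert, Finset.mem_singleton, Fin.ext_iff]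
        omega
      · exact le_trans (Finset.card_insert_le _ _) (by simp)
      · rintro c ⟨⟨v, a⟩, rfl⟩ c' ⟨⟨w, b⟩, rfl⟩ hagree
        simp only [hψ_apply] at hagree ⊢
        have h1 := hagree ⟨(i:ℕ) + n', by omega⟩ (by simp)
        have h2 := hagree ⟨2*n', by omega⟩ (by simp)
        rw [myphi_apply_mid n' _ _ hi, myphi_apply_mid n' _ _ hi] at h1
        rw [myphi_apply_last, myphi_apply_last] at h2
        rw [show i = (⟨(i:ℕ), by omega⟩ : Fin (2*n'+1)) from rfl,
          myphi_apply_lt n' _ _ hi, myphi_apply_lt n' _ _ hi]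
        have : (v : Fin n' → ZMod 2) ⟨(i:ℕ), hi⟩ = (w : Fin n' → ZMod 2) ⟨(i:ℕ), hi⟩ := by
          have := h1
          rw [h2] at this
          exact add_right_cancel this
        exact this
    · rcases lt_or_ge (i : ℕ) (2*n') with hi2 | hi2
      · have hj : (i:ℕ) - n' < n' := by omega
        refine ⟨{⟨(i:ℕ) - n', by omega⟩, ⟨2*n', by omega⟩}, ?_, ?_, ?_⟩
        · simp only [Finset.mem_insert, Finset.mem_singleton, Fin.ext_iff]
          omega
        · exact le_trans (Finset.card_insert_le _ _) (by simp)
        · rintro c ⟨⟨v, a⟩, rfl⟩ c' ⟨⟨w, b⟩, rfl⟩ hagree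
          simp only [hψ_apply] at hagree ⊢
          have h1 := hagree ⟨(i:ℕ) - n', by omega⟩ (by simp)
          have h2 := hagree ⟨2*n', by omega⟩ (by simp)
          rw [myphi_apply_lt n' _ _ hj, myphi_apply_lt n' _ _ hj] at h1
          rw [myphi_apply_last, myphi_apply_last] at h2
          rw [show i = (⟨(i:ℕ) - n' + n', by omega⟩ : Fin (2*n'+1)) from Fin.ext (by simp only [Fin.val_mk]; omega),
            myphi_apply_mid n' _ _ hj, myphi_apply_mid n' _ _ hj, h1, h2]
      · have hi3 : (i:ℕ) = 2*n' := by omega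
        have h0n : 0 < n' := by omega
        refine ⟨{⟨0, by omega⟩, ⟨n', by omega⟩}, ?_, ?_, ?_⟩
        · simp only [Finset.mem_insert, Finset.mem_singleton, Fin.ext_iff]
          omega
        · exact le_trans (Finset.card_insert_le _ _) (by simp)
        · rintro c ⟨⟨v, a⟩, rfl⟩ c' ⟨⟨w, b⟩, rfl⟩ hagree
          simp only [hψ_apply] at hagree ⊢
          have h1 := hagree ⟨0, by omega⟩ (by simp)
          have h2 := hagree ⟨n', by omega⟩ (by simp)
          rw [myphi_apply_lt n' _ _ h0n, myphi_apply_lt n' _ _ h0n] at h1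
          rw [show (⟨n', by omega⟩ : Fin (2*n'+1)) = ⟨0 + n', by omega⟩ from Fin.ext (by simp only [Fin.val_mk]; omega),
            myphi_apply_mid n' _ _ h0n, myphi_apply_mid n' _ _ h0n, h1] at h2
          rw [show i = (⟨2*n', by omega⟩ : Fin (2*n'+1)) from Fin.ext (by simp only [Fin.val_mk]; omega),
            myphi_apply_last, myphi_apply_last]
          exact add_left_cancel h2
  have hE : LRCExists 2 (2*n'+1) (k'+1) (min (2*d') (n'+1)) 2 :=
    ⟨ZMod 2, inferInstance, by simp [Nat.card_zmod], D, ⟨hrankD, hdistD⟩, hlocD⟩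
  exact ⟨Nat.sInf_le hE, hE⟩
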